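/- Anomalous surface area of the interior-exterior boundary: as ρ → r_s (through ρ > 0, ρ ≠ r_s), the surface-area function A(ρ) satisfies: A(ρ) → 4π r_s² if k̃ = 0; A(ρ) → 16π r_s² if k̃ = −1; A(ρ) → 0 if k̃ < −1 or k̃ > 0; and A(ρ) → +∞ if −1 < k̃ < 0. -/

import Mathlib

open Real Filter Topology

/-- Anomalous surface area of the interior-exterior boundary: as `ρ → r_s` (through
`ρ > 0`, `ρ ≠ r_s`), `A(ρ) → 4π r_s²` if `k̃ = 0`; `→ 16π r_s²` if `k̃ = −1`;
`→ 0` if `k̃ < −1` or `k̃ > 0`; and `→ +∞` if `−1 < k̃ < 0`. -/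
theorem surface_area_boundary_anomaly
    (rs kt : ℝ) (hrs : 0 < rs)
    (ζ : ℝ) (hζ : ζ = Real.sqrt (1 + 3 * kt ^ 2))
    (A : ℝ → ℝ)
    (hA : ∀ ρ : ℝ, 0 < ρ → ρ ≠ rs → A ρ =
      4 * Real.pi * ζ ^ 2 * rs ^ 2 * |1 - rs / ρ| ^ (ζ + kt - 1) /
        (1 - Real.sign (1 - rs / ρ) * |1 - rs / ρ| ^ ζ) ^ 2) :
    (kt = 0 →
        Tendsto A (𝓝[Set.Ioi 0 \ {rs}] rs) (𝓝 (4 * Real.pi * rs ^ 2))) ∧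
      (kt = -1 →
        Tendsto A (𝓝[Set.Ioi 0 \ {rs}] rs) (𝓝 (16 * Real.pi * rs ^ 2))) ∧
      (kt < -1 ∨ 0 < kt →
        Tendsto A (𝓝[Set.Ioi 0 \ {rs}] rs) (𝓝 0)) ∧
      (-1 < kt ∧ kt < 0 →
        Tendsto A (𝓝[Set.Ioi 0 \ {rs}] rs) atTop) := by
  set s : Set ℝ := Set.Ioi 0 \ {rs} with hs
  set F : ℝ → ℝ := fun t =>
    4 * Real.pi * ζ ^ 2 * rs ^ 2 * |t| ^ (ζ + kt - 1) /
      (1 - Real.sign t * |t| ^ ζ) ^ 2 with hF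
  have hζsq : ζ ^ 2 = 1 + 3 * kt ^ 2 := by
    rw [hζ]; exact Real.sq_sqrt (by positivity)
  have hζ0 : 0 ≤ ζ := hζ ▸ Real.sqrt_nonneg _
  have hζ1 : (1:ℝ) ≤ ζ := by nlinarith [sq_nonneg kt]
  have hζpos : 0 < ζ := lt_of_lt_of_le one_pos hζ1
  -- x tends to punctured nbhd of 0
  have hcont : Tendsto (fun ρ => 1 - rs / ρ) (𝓝 rs) (𝓝 0) := by
    have h : ContinuousAt (fun ρ => 1 - rs / ρ) rs :=
      continuousAt_const.sub (continuousAt_const.div continuousAt_id hrs.ne')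
    simpa [div_self hrs.ne'] using h.tendsto
  have hx : Tendsto (fun ρ => 1 - rs / ρ) (𝓝[s] rs) (𝓝[≠] 0) := by
    apply tendsto_nhdsWithin_of_tendsto_nhds_of_eventually_within _
      (hcont.mono_left nhdsWithin_le_nhds)
    filter_upwards [self_mem_nhdsWithin] with ρ hρ
    obtain ⟨hρ0, hρne⟩ := hρ
    have hρ0' : (0:ℝ) < ρ := hρ0
    have : rs / ρ ≠ 1 := by
      intro h
      exact hρne (by field_simp at h; simp [h])
    simpa [Set.mem_compl_singleton_iff, sub_ne_zero] using (Ne.symm this)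
  have hAeq : ∀ᶠ ρ in 𝓝[s] rs, A ρ = F (1 - rs / ρ) := by
    filter_upwards [self_mem_nhdsWithin] with ρ hρ
    exact hA ρ hρ.1 hρ.2
  -- |t|^ζ → 0
  have habsz : Tendsto (fun t : ℝ => |t| ^ ζ) (𝓝 0) (𝓝 0) := by
    have h1 : Tendsto (fun u : ℝ => u ^ ζ) (𝓝 0) (𝓝 0) := by
      have := (Real.continuousAt_rpow_const 0 ζ (Or.inr hζpos.le)).tendsto
      simpa [Real.zero_rpow hζpos.ne'] using this
    exact h1.comp (continuous_abs.tendsto' 0 0 abs_zero)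
  have hsgnabs : ∀ t : ℝ, |Real.sign t| ≤ 1 := by
    intro t
    rcases lt_trichotomy t 0 with h | h | h
    · simp [Real.sign_of_neg h]
    · simp [h]
    · simp [Real.sign_of_pos h]
  have hsign : Tendsto (fun t : ℝ => Real.sign t * |t| ^ ζ) (𝓝 0) (𝓝 0) := by
    apply squeeze_zero_norm _ habsz
    intro t
    rw [norm_mul]
    calc ‖Real.sign t‖ * ‖|t| ^ ζ‖ ≤ 1 * ‖|t| ^ ζ‖ := by
          apply mul_le_mul_of_nonneg_right (hsgnabs t) (norm_nonneg _)
      _ = |t| ^ ζ := by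
          rw [one_mul, Real.norm_eq_abs, abs_of_nonneg (Real.rpow_nonneg (abs_nonneg t) ζ)]
  have hD : Tendsto (fun t : ℝ => (1 - Real.sign t * |t| ^ ζ) ^ 2) (𝓝 0) (𝓝 1) := by
    have := ((tendsto_const_nhds (x := (1:ℝ))).sub hsign).pow 2
    simpa using this
  -- case e = 0 general lemma
  have hzero : ζ + kt - 1 = 0 → Tendsto A (𝓝[s] rs) (𝓝 (4 * Real.pi * ζ ^ 2 * rs ^ 2)) := by
    intro he
    have hFt : Tendsto F (𝓝 0) (𝓝 (4 * Real.pi * ζ ^ 2 * rs ^ 2)) := by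
      have := (tendsto_const_nhds (x := 4 * Real.pi * ζ ^ 2 * rs ^ 2)).div hD one_ne_zero
      simp only [hF, he, Real.rpow_zero, mul_one]
      simpa [Pi.div_def] using this
    exact Tendsto.congr' (hAeq.mono fun ρ h => h.symm) ((hFt.mono_left nhdsWithin_le_nhds).comp hx)
  refine ⟨?_, ?_, ?_, ?_⟩
  · intro hk
    subst hk
    have hζ2 : ζ = 1 := by rw [hζ]; norm_num
    have := hzero (by rw [hζ2]; ring)
    simpa [hζ2] using this
  · intro hk
    subst hk
    have hζ2 : ζ = 2 := by
      rw [hζ]; norm_num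
    have := hzero (by rw [hζ2]; ring)
    rw [hζ2] at this
    convert this using 2
    ring
  · intro hk
    have he : 0 < ζ + kt - 1 := by
      rcases hk with hk | hk
      · nlinarith
      · linarith
    have habse : Tendsto (fun t : ℝ => |t| ^ (ζ + kt - 1)) (𝓝 0) (𝓝 0) := by
      have h1 : Tendsto (fun u : ℝ => u ^ (ζ + kt - 1)) (𝓝 0) (𝓝 0) := by
        have := (Real.continuousAt_rpow_const 0 (ζ + kt - 1) (Or.inr he.le)).tendsto
        simpa [Real.zero_rpow he.ne'] using this
      exact h1.comp (continuous_abs.tendsto' 0 0 abs_zero)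
    have hFt : Tendsto F (𝓝 0) (𝓝 0) := by
      have := (tendsto_const_nhds (x := 4 * Real.pi * ζ ^ 2 * rs ^ 2)).mul habse |>.div hD one_ne_zero
      simpa [hF, Pi.div_def] using this
    exact Tendsto.congr' (hAeq.mono fun ρ h => h.symm) ((hFt.mono_left nhdsWithin_le_nhds).comp hx)
  · rintro ⟨hk1, hk2⟩
    have he : ζ + kt - 1 < 0 := by nlinarith
    have hc : 0 < 4 * Real.pi * ζ ^ 2 * rs ^ 2 :=
      mul_pos (mul_pos (by positivity) (pow_pos hζpos 2)) (pow_pos hrs 2)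
    have habs' : Tendsto (fun t : ℝ => |t|) (𝓝[≠] 0) (𝓝[>] 0) := by
      apply tendsto_nhdsWithin_of_tendsto_nhds_of_eventually_within _
        ((continuous_abs.tendsto' 0 0 abs_zero).mono_left nhdsWithin_le_nhds)
      filter_upwards [self_mem_nhdsWithin] with t ht
      exact abs_pos.mpr ht
    have hr : Tendsto (fun u : ℝ => u ^ (ζ + kt - 1)) (𝓝[>] 0) atTop := by
      have h1 : Tendsto (fun u : ℝ => (u⁻¹) ^ (-(ζ + kt - 1))) (𝓝[>] 0) atTop :=
        (tendsto_rpow_atTop (by linarith)).comp tendsto_inv_nhdsGT_zero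
      apply h1.congr'
      filter_upwards [self_mem_nhdsWithin] with u hu
      rw [Real.inv_rpow (le_of_lt hu), ← Real.rpow_neg (le_of_lt hu), neg_neg]
    have hrt : Tendsto (fun t : ℝ => |t| ^ (ζ + kt - 1)) (𝓝[≠] 0) atTop := hr.comp habs'
    have hcD : Tendsto (fun t : ℝ => 4 * Real.pi * ζ ^ 2 * rs ^ 2 / (1 - Real.sign t * |t| ^ ζ) ^ 2)
        (𝓝[≠] 0) (𝓝 (4 * Real.pi * ζ ^ 2 * rs ^ 2)) := by
      have := (tendsto_const_nhds (x := 4 * Real.pi * ζ ^ 2 * rs ^ 2)).div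
        (hD.mono_left (nhdsWithin_le_nhds (s := {(0:ℝ)}ᶜ))) one_ne_zero
      simpa [Pi.div_def] using this
    have hFt : Tendsto F (𝓝[≠] 0) atTop := by
      exact (hcD.pos_mul_atTop hc hrt).congr fun t => (mul_div_right_comm _ _ _).symm
    exact Tendsto.congr' (hAeq.mono fun ρ h => h.symm) (hFt.comp hx)
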